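/- For the induced digits β_n = χ ∘ τ_B^{n-1} of the doubling map and t_n = n·(log n)^{3/4}, Lebesgue-almost surely only finitely many n satisfy #{i ≤ n : β_i ≥ t_n} ≥ 2. -/

import Mathlib

open MeasureTheory Set

/-- The doubling map `τ(x) = 2x mod 1`. -/
noncomputable def tau (x : ℝ) : ℝ := Int.fract (2 * x)

/-- The first exit time to `B = [1/2,1)`, plus one. -/
noncomputable def phi (x : ℝ) : ℕ := sInf {n : ℕ | tau^[n] x ∈ Set.Ico (1 / 2 : ℝ) 1} + 1

/-- The jump transformation `τ_B(x) = τ^{φ(x)}(x)`. -/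
noncomputable def tauB (x : ℝ) : ℝ := tau^[phi x] x

open scoped ENNReal

lemma fract_two_mul_fract (y : ℝ) : Int.fract (2 * Int.fract y) = Int.fract (2 * y) := by
  have h : 2 * Int.fract y = 2 * y - ((2 * ⌊y⌋ : ℤ) : ℝ) := by
    rw [Int.fract]; push_cast; ring
  rw [h, Int.fract_sub_intCast]

lemma tau_iterate_succ (n : ℕ) (x : ℝ) : tau^[n + 1] x = Int.fract (2 ^ (n + 1) * x) := by
  induction n with
  | zero => simp [tau]
  | succ n ih =>
      rw [Function.iterate_succ_apply', ih, tau, fract_two_mul_fract]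
      congr 1
      ring

lemma tau_iterate {x : ℝ} (hx : x ∈ Set.Ico (0 : ℝ) 1) (n : ℕ) :
    tau^[n] x = Int.fract (2 ^ n * x) := by
  cases n with
  | zero => simp [Int.fract_eq_self.mpr ⟨hx.1, hx.2⟩]
  | succ n => exact tau_iterate_succ n x

lemma tauB_mem (x : ℝ) : tauB x ∈ Set.Ico (0 : ℝ) 1 := by
  rw [tauB, phi, tau_iterate_succ]
  exact ⟨Int.fract_nonneg _, Int.fract_lt_one _⟩

lemma tauB_iter_mem {x : ℝ} (hx : x ∈ Set.Ico (0 : ℝ) 1) (k : ℕ) :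
    tauB^[k] x ∈ Set.Ico (0 : ℝ) 1 := by
  cases k with
  | zero => exact hx
  | succ k => rw [Function.iterate_succ_apply']; exact tauB_mem _

lemma tauB_block {a : ℕ} {x : ℝ} (hx : x ∈ Set.Ico ((1 : ℝ) / 2 ^ (a + 1)) (1 / 2 ^ a)) :
    tauB x = 2 ^ (a + 1) * x - 1 := by
  have h2a : (0 : ℝ) < 2 ^ a := by positivity
  have h2a1 : (0 : ℝ) < 2 ^ (a + 1) := by positivity
  have hx0 : 0 < x := lt_of_lt_of_le (by positivity) hx.1
  have hx1 : x < 1 := lt_of_lt_of_le hx.2 (by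
    rw [div_le_one h2a]
    exact one_le_pow₀ (by norm_num))
  have hxIco : x ∈ Set.Ico (0 : ℝ) 1 := ⟨hx0.le, hx1⟩
  -- 2^a * x ∈ [1/2, 1)
  have hmem : 2 ^ a * x ∈ Set.Ico (1 / 2 : ℝ) 1 := by
    constructor
    · have := hx.1
      rw [div_le_iff₀ h2a1] at this
      rw [div_le_iff₀ (by norm_num : (0:ℝ) < 2)] -- 1/2 ≤ 2^a x ↔ 1 ≤ 2^a x * 2
      calc (1 : ℝ) ≤ x * 2 ^ (a + 1) := this
        _ = 2 ^ a * x * 2 := by ring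
    · have := hx.2
      rw [lt_div_iff₀ h2a] at this
      linarith [this]
  have hsinf : sInf {n : ℕ | tau^[n] x ∈ Set.Ico (1 / 2 : ℝ) 1} = a := by
    have hamem : a ∈ {n : ℕ | tau^[n] x ∈ Set.Ico (1 / 2 : ℝ) 1} := by
      show tau^[a] x ∈ Set.Ico (1 / 2 : ℝ) 1
      rw [tau_iterate hxIco, Int.fract_eq_self.mpr ⟨by linarith [hmem.1], hmem.2⟩]
      exact hmem
    refine le_antisymm (Nat.sInf_le hamem) (le_csInf ⟨a, hamem⟩ ?_)
    intro m hm
    by_contra hlt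
    push_neg at hlt
    have hmlt : (2:ℝ) ^ m * x < 1 / 2 := by
      have hpow : (2:ℝ) ^ m * 2 ≤ 2 ^ a := by
        have : (2:ℝ) ^ (m + 1) ≤ 2 ^ a := pow_le_pow_right₀ (by norm_num) (by omega)
        calc (2:ℝ) ^ m * 2 = 2 ^ (m + 1) := by ring
          _ ≤ 2 ^ a := this
      have hxa : x * 2 ^ a < 1 := by
        have := hx.2
        rw [lt_div_iff₀ h2a] at this
        exact this
      have hm0 : (0:ℝ) < 2 ^ m := by positivity
      rw [lt_div_iff₀ (by norm_num : (0:ℝ) < 2)]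
      nlinarith [mul_pos hm0 hx0]
    have : tau^[m] x ∈ Set.Ico (1 / 2 : ℝ) 1 := hm
    rw [tau_iterate hxIco, Int.fract_eq_self.mpr ⟨by positivity, by linarith⟩] at this
    linarith [this.1]
  have hphi : phi x = a + 1 := by rw [phi, hsinf]
  rw [tauB, hphi, tau_iterate_succ]
  have h1 : (1:ℝ) ≤ 2 ^ (a + 1) * x := by
    have := hx.1
    rw [div_le_iff₀ h2a1] at this
    linarith [this]
  have h2 : (2:ℝ) ^ (a + 1) * x < 2 := by
    have hxa : x * 2 ^ a < 1 := by
      have := hx.2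
      rw [lt_div_iff₀ h2a] at this
      exact this
    have : (2:ℝ) ^ (a + 1) = 2 ^ a * 2 := by ring
    rw [this]
    nlinarith
  have : ⌊(2:ℝ) ^ (a + 1) * x⌋ = 1 := by
    rw [Int.floor_eq_iff]
    constructor <;> push_cast <;> linarith
  rw [Int.fract, this]
  norm_num

lemma exists_block {x : ℝ} (h0 : 0 < x) (h1 : x < 1) :
    ∃ a : ℕ, x ∈ Set.Ico ((1 : ℝ) / 2 ^ (a + 1)) (1 / 2 ^ a) := by
  have hex : ∃ n : ℕ, (1 : ℝ) / 2 ^ (n + 1) ≤ x := by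
    obtain ⟨n, hn⟩ := pow_unbounded_of_one_lt (1 / x) (by norm_num : (1:ℝ) < 2)
    refine ⟨n, ?_⟩
    rw [div_le_iff₀ (by positivity)]
    rw [div_lt_iff₀ h0] at hn
    have : (2:ℝ) ^ n ≤ 2 ^ (n + 1) := pow_le_pow_right₀ (by norm_num) (by omega)
    nlinarith
  set a := Nat.find hex with ha
  refine ⟨a, Nat.find_spec hex, ?_⟩
  rcases Nat.eq_zero_or_pos a with h | h
  · rw [h]; simpa using h1
  · obtain ⟨b, hb⟩ : ∃ b, a = b + 1 := ⟨a - 1, by omega⟩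
    have := Nat.find_min hex (by omega : b < a)
    push_neg at this
    rw [hb]
    exact this

/-- volume of preimage under `x ↦ 2^(a+1) x - 1`, for an arbitrary set. -/
lemma vol_affine_preimage (a : ℕ) (E : Set ℝ) :
    volume ((fun x => (2:ℝ) ^ (a + 1) * x - 1) ⁻¹' E) =
      ENNReal.ofReal ((1:ℝ) / 2 ^ (a + 1)) * volume E := by
  have key : (fun x => (2:ℝ) ^ (a + 1) * x - 1) ⁻¹' E
      = (fun y => (2:ℝ) ^ (a+1) * y) ⁻¹' ((fun y => (-1) + y) ⁻¹' E) := by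
    ext x
    simp only [Set.mem_preimage]
    rw [neg_add_eq_sub]
  rw [key, Real.volume_preimage_mul_left (by positivity : ((2:ℝ) ^ (a+1)) ≠ 0),
    measure_preimage_add volume (-1) E]
  congr 1
  rw [abs_of_pos (by positivity), one_div]

lemma exists_pow_le {c : ℝ} (hc : 0 < c) : ∃ n : ℕ, (1:ℝ) / 2 ^ (n + 1) ≤ c := by
  obtain ⟨n, hn⟩ := pow_unbounded_of_one_lt (1 / c) (by norm_num : (1:ℝ) < 2)
  refine ⟨n, ?_⟩
  rw [div_le_iff₀ (by positivity)]
  rw [div_lt_iff₀ hc] at hn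
  have : (2:ℝ) ^ n ≤ 2 ^ (n + 1) := pow_le_pow_right₀ (by norm_num) (by omega)
  nlinarith

lemma tsum_bound {c : ℝ} (hc : 0 < c) :
    (∑' a : ℕ, if (1:ℝ) / 2 ^ (a + 1) ≤ c then ENNReal.ofReal ((1:ℝ) / 2 ^ (a + 1)) else 0)
      ≤ ENNReal.ofReal (min 1 (2 * c)) := by
  classical
  set g : ℕ → ℝ≥0∞ := fun a =>
    if (1:ℝ) / 2 ^ (a + 1) ≤ c then ENNReal.ofReal ((1:ℝ) / 2 ^ (a + 1)) else 0 with hg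
  have hex := exists_pow_le hc
  set a0 := Nat.find hex with ha0
  have hspec : (1:ℝ) / 2 ^ (a0 + 1) ≤ c := Nat.find_spec hex
  have hinj : Function.Injective (fun b : ℕ => a0 + b) := fun x y h => by
    simp only [] at h; omega
  have hsupp : Function.support g ⊆ Set.range (fun b : ℕ => a0 + b) := by
    intro a ha
    have hcond : (1:ℝ) / 2 ^ (a + 1) ≤ c := by
      by_contra h
      exact ha (if_neg h)
    have : a0 ≤ a := Nat.find_min' hex hcond
    exact ⟨a - a0, by simp only []; omega⟩
  have heq : (∑' b : ℕ, g (a0 + b)) = ∑' a, g a := hinj.tsum_eq hsupp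
  rw [← heq]
  have hcond : ∀ b : ℕ, (1:ℝ) / 2 ^ (a0 + b + 1) ≤ c := by
    intro b
    refine le_trans ?_ hspec
    rw [div_le_div_iff₀ (by positivity) (by positivity)]
    have : (2:ℝ) ^ (a0 + 1) ≤ 2 ^ (a0 + b + 1) := pow_le_pow_right₀ (by norm_num) (by omega)
    nlinarith
  have hterm : ∀ b : ℕ, g (a0 + b) = ENNReal.ofReal ((1:ℝ) / 2 ^ (a0 + b + 1)) := by
    intro b
    show (if (1:ℝ) / 2 ^ (a0 + b + 1) ≤ c then ENNReal.ofReal ((1:ℝ) / 2 ^ (a0 + b + 1)) else 0)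
      = ENNReal.ofReal ((1:ℝ) / 2 ^ (a0 + b + 1))
    exact if_pos (hcond b)
  rw [tsum_congr hterm]
  have hsummable : Summable (fun b : ℕ => (1:ℝ) / 2 ^ (a0 + b + 1)) := by
    refine Summable.congr (((summable_geometric_of_lt_one (by norm_num : (0:ℝ) ≤ 1/2)
      (by norm_num : (1/2:ℝ) < 1))).mul_left ((1:ℝ) / 2 ^ (a0 + 1))) ?_
    intro b
    rw [pow_add, pow_add]
    field_simp
    have hP : (2:ℝ)^b * (1/2)^b = 1 := by rw [← mul_pow]; norm_num
    linear_combination (2:ℝ)^a0 * hP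
  rw [← ENNReal.ofReal_tsum_of_nonneg (fun b => by positivity) hsummable]
  apply ENNReal.ofReal_le_ofReal
  have htsum_eq : (∑' b : ℕ, (1:ℝ) / 2 ^ (a0 + b + 1)) = (1:ℝ) / 2 ^ a0 := by
    have h1 : (fun b : ℕ => (1:ℝ) / 2 ^ (a0 + b + 1))
        = fun b : ℕ => ((1:ℝ) / 2 ^ (a0 + 1)) * (1/2) ^ b := by
      funext b
      rw [pow_add, pow_add]
      field_simp
      have hP : (2:ℝ)^b * (1/2)^b = 1 := by rw [← mul_pow]; norm_num
      linear_combination (-(2:ℝ)^a0*2) * hP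
    rw [h1, tsum_mul_left, tsum_geometric_of_lt_one (by norm_num) (by norm_num)]
    rw [pow_succ]
    field_simp
    ring
  rw [htsum_eq]
  refine le_min ?_ ?_
  · rw [div_le_one (by positivity)]
    exact one_le_pow₀ (by norm_num)
  · have : (1:ℝ) / 2 ^ a0 = 2 * ((1:ℝ) / 2 ^ (a0 + 1)) := by
      rw [pow_succ]; field_simp
    rw [this]
    linarith

lemma step_bound {c : ℝ} (hc : 0 < c) (hc1 : c ≤ 1) (E : Set ℝ) :
    volume (Set.Ioc 0 c ∩ tauB ⁻¹' E) ≤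
      ENNReal.ofReal (min 1 (2 * c)) * volume (E ∩ Set.Ico 0 1) := by
  classical
  set E' := E ∩ Set.Ico (0:ℝ) 1 with hE'
  set S : ℕ → Set ℝ := fun a => Set.Ico ((1:ℝ)/2^(a+1)) (1/2^a) ∩ Set.Iic c ∩
      (fun x => (2:ℝ)^(a+1) * x - 1) ⁻¹' E' with hS
  have hcover : Set.Ioc 0 c ∩ tauB ⁻¹' E ⊆ {1} ∪ ⋃ a : ℕ, S a := by
    rintro x ⟨⟨hx0, hxc⟩, hxE⟩
    rcases eq_or_lt_of_le (hxc.trans hc1) with h1 | h1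
    · exact Or.inl h1
    · refine Or.inr (Set.mem_iUnion.mpr ?_)
      obtain ⟨a, ha⟩ := exists_block hx0 h1
      refine ⟨a, ⟨ha, hxc⟩, ?_⟩
      show (2:ℝ)^(a+1) * x - 1 ∈ E'
      rw [← tauB_block ha]
      exact ⟨hxE, tauB_mem x⟩
  have hper : ∀ a : ℕ, volume (S a) ≤
      (if (1:ℝ)/2^(a+1) ≤ c then ENNReal.ofReal ((1:ℝ)/2^(a+1)) else 0) * volume E' := by
    intro a
    by_cases h : (1:ℝ)/2^(a+1) ≤ c
    · rw [if_pos h]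
      calc volume (S a) ≤ volume ((fun x => (2:ℝ)^(a+1) * x - 1) ⁻¹' E') :=
            measure_mono Set.inter_subset_right
        _ = _ := vol_affine_preimage a E'
    · rw [if_neg h, zero_mul]
      have hempty : S a = ∅ := by
        ext x
        simp only [hS, Set.mem_inter_iff, Set.mem_Ico, Set.mem_Iic, Set.mem_empty_iff_false,
          iff_false]
        rintro ⟨⟨⟨h1, _⟩, h2⟩, _⟩
        exact h (h1.trans h2)
      rw [hempty]
      simp
  calc volume (Set.Ioc 0 c ∩ tauB ⁻¹' E) ≤ volume ({1} ∪ ⋃ a : ℕ, S a) := measure_mono hcover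
    _ ≤ volume ({(1:ℝ)}) + volume (⋃ a : ℕ, S a) := measure_union_le _ _
    _ = volume (⋃ a : ℕ, S a) := by rw [Real.volume_singleton, zero_add]
    _ ≤ ∑' a : ℕ, volume (S a) := measure_iUnion_le _
    _ ≤ ∑' a : ℕ, (if (1:ℝ)/2^(a+1) ≤ c then ENNReal.ofReal ((1:ℝ)/2^(a+1)) else 0) * volume E' :=
        ENNReal.tsum_le_tsum hper
    _ = (∑' a : ℕ, if (1:ℝ)/2^(a+1) ≤ c then ENNReal.ofReal ((1:ℝ)/2^(a+1)) else 0) * volume E' :=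
        ENNReal.tsum_mul_right
    _ ≤ ENNReal.ofReal (min 1 (2 * c)) * volume E' := mul_le_mul_left (tsum_bound hc) _

lemma iter_bound (E : Set ℝ) : ∀ d : ℕ,
    volume (Set.Ico (0:ℝ) 1 ∩ (tauB^[d]) ⁻¹' E) ≤ volume (E ∩ Set.Ico (0:ℝ) 1)
  | 0 => by rw [Function.iterate_zero, Set.preimage_id, Set.inter_comm]
  | (d+1) => by
      have hsub : Set.Ico (0:ℝ) 1 ∩ (tauB^[d+1]) ⁻¹' E ⊆
          {0} ∪ (Set.Ioc (0:ℝ) 1 ∩ tauB ⁻¹' ((Set.Ico (0:ℝ) 1 ∩ (tauB^[d]) ⁻¹' E))) := by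
        rintro x ⟨⟨hx0, hx1⟩, hxE⟩
        rcases eq_or_lt_of_le hx0 with h | h
        · exact Or.inl h.symm
        · refine Or.inr ⟨⟨h, hx1.le⟩, ?_, ?_⟩
          · exact tauB_mem x
          · show tauB^[d] (tauB x) ∈ E
            rw [← Function.iterate_succ_apply]
            exact hxE
      calc volume (Set.Ico (0:ℝ) 1 ∩ (tauB^[d+1]) ⁻¹' E)
          ≤ volume ({(0:ℝ)}) + volume (Set.Ioc (0:ℝ) 1 ∩
              tauB ⁻¹' ((Set.Ico (0:ℝ) 1 ∩ (tauB^[d]) ⁻¹' E))) :=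
            le_trans (measure_mono hsub) (measure_union_le _ _)
        _ = volume (Set.Ioc (0:ℝ) 1 ∩ tauB ⁻¹' ((Set.Ico (0:ℝ) 1 ∩ (tauB^[d]) ⁻¹' E))) := by
            rw [Real.volume_singleton, zero_add]
        _ ≤ ENNReal.ofReal (min 1 (2 * 1)) *
              volume ((Set.Ico (0:ℝ) 1 ∩ (tauB^[d]) ⁻¹' E) ∩ Set.Ico (0:ℝ) 1) :=
            step_bound one_pos le_rfl _
        _ = volume (Set.Ico (0:ℝ) 1 ∩ (tauB^[d]) ⁻¹' E) := by
            rw [Set.inter_assoc, Set.inter_comm ((tauB^[d]) ⁻¹' E), ← Set.inter_assoc,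
              Set.inter_self]
            norm_num
        _ ≤ volume (E ∩ Set.Ico (0:ℝ) 1) := iter_bound E d

/-- The set where the induced digit is at least `T`. -/
def Gs (T : ℝ) : Set ℝ := Set.Ico (0:ℝ) 1 ∩ {y : ℝ | T ≤ (⌊1 / y⌋ : ℝ)}

lemma Gs_subset {T : ℝ} (hT : 1 ≤ T) : Gs T ⊆ Set.Ioc 0 (1 / T) := by
  rintro y ⟨⟨hy0, hy1⟩, hyT⟩
  have hy0' : 0 < y := by
    rcases eq_or_lt_of_le hy0 with h | h
    · exfalso
      rw [← h] at hyT
      norm_num at hyT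
      linarith
    · exact h
  have hfl : (⌊1 / y⌋ : ℝ) ≤ 1 / y := Int.floor_le _
  have hT1y : T ≤ 1 / y := le_trans hyT hfl
  refine ⟨hy0', ?_⟩
  rw [le_div_iff₀ hy0'] at hT1y
  rw [le_div_iff₀ (by linarith : (0:ℝ) < T)]
  linarith [hT1y]

lemma vol_Gs {T : ℝ} (hT : 1 ≤ T) :
    volume (Gs T ∩ Set.Ico (0:ℝ) 1) ≤ ENNReal.ofReal (1 / T) := by
  calc volume (Gs T ∩ Set.Ico (0:ℝ) 1) ≤ volume (Set.Ioc (0:ℝ) (1/T)) :=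
        measure_mono (le_trans Set.inter_subset_left (Gs_subset hT))
    _ = ENNReal.ofReal (1 / T - 0) := Real.volume_Ioc
    _ = ENNReal.ofReal (1 / T) := by rw [sub_zero]

lemma pair_bound (k d : ℕ) {T : ℝ} (hT : 1 ≤ T) :
    volume (Set.Ico (0:ℝ) 1 ∩ (tauB^[k]) ⁻¹' (Gs T) ∩ (tauB^[k + (d + 1)]) ⁻¹' (Gs T)) ≤
      ENNReal.ofReal (2 / T ^ 2) := by
  have hT0 : (0:ℝ) < T := by linarith
  have hident : Set.Ico (0:ℝ) 1 ∩ (tauB^[k]) ⁻¹' (Gs T) ∩ (tauB^[k + (d + 1)]) ⁻¹' (Gs T)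
      = Set.Ico (0:ℝ) 1 ∩ (tauB^[k]) ⁻¹' (Gs T ∩ (tauB^[d + 1]) ⁻¹' (Gs T)) := by
    ext x
    simp only [Set.mem_inter_iff, Set.mem_preimage, Set.inter_assoc]
    constructor
    · rintro ⟨h1, h2, h3⟩
      refine ⟨h1, h2, ?_⟩
      rw [add_comm, Function.iterate_add_apply] at h3
      exact h3
    · rintro ⟨h1, h2, h3⟩
      refine ⟨h1, h2, ?_⟩
      rw [add_comm, Function.iterate_add_apply]
      exact h3
  rw [hident]
  calc volume (Set.Ico (0:ℝ) 1 ∩ (tauB^[k]) ⁻¹' (Gs T ∩ (tauB^[d + 1]) ⁻¹' (Gs T)))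
      ≤ volume ((Gs T ∩ (tauB^[d + 1]) ⁻¹' (Gs T)) ∩ Set.Ico (0:ℝ) 1) := iter_bound _ k
    _ ≤ volume (Set.Ioc (0:ℝ) (1/T) ∩ tauB ⁻¹' ((tauB^[d]) ⁻¹' (Gs T))) := by
        apply measure_mono
        rintro x ⟨⟨hx1, hx2⟩, _⟩
        refine ⟨Gs_subset hT hx1, ?_⟩
        show tauB^[d] (tauB x) ∈ Gs T
        rw [← Function.iterate_succ_apply]
        exact hx2
    _ ≤ ENNReal.ofReal (min 1 (2 * (1/T))) *
          volume ((tauB^[d]) ⁻¹' (Gs T) ∩ Set.Ico (0:ℝ) 1) := by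
        apply step_bound (by positivity)
        rw [div_le_one hT0]; exact hT
    _ ≤ ENNReal.ofReal (2 * (1/T)) * volume (Set.Ico (0:ℝ) 1 ∩ (tauB^[d]) ⁻¹' (Gs T)) := by
        rw [Set.inter_comm]
        exact mul_le_mul_left (ENNReal.ofReal_le_ofReal (min_le_right _ _)) _
    _ ≤ ENNReal.ofReal (2 * (1/T)) * volume (Gs T ∩ Set.Ico (0:ℝ) 1) :=
        mul_le_mul_right (iter_bound _ d) _
    _ ≤ ENNReal.ofReal (2 * (1/T)) * ENNReal.ofReal (1/T) := mul_le_mul_right (vol_Gs hT) _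
    _ = ENNReal.ofReal (2 / T ^ 2) := by
        rw [← ENNReal.ofReal_mul (by positivity)]
        congr 1
        field_simp

/-- `t n = n (log n)^{3/4}`. -/
noncomputable def tt (n : ℕ) : ℝ := (n : ℝ) * (Real.log n) ^ ((3:ℝ)/4)

lemma tt_mono {m n : ℕ} (hm : 1 ≤ m) (hmn : m ≤ n) : tt m ≤ tt n := by
  unfold tt
  have h1 : (1:ℝ) ≤ (m:ℝ) := by exact_mod_cast hm
  have h2 : (m:ℝ) ≤ (n:ℝ) := by exact_mod_cast hmn
  apply mul_le_mul h2 ?_ (Real.rpow_nonneg (Real.log_nonneg h1) _) (by linarith)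
  exact Real.rpow_le_rpow (Real.log_nonneg h1) (Real.log_le_log (by linarith) h2) (by norm_num)

lemma tt_two : 1 ≤ tt 2 := by
  unfold tt
  have hlog : Real.log 2 < 1 := by
    have := Real.log_two_lt_d9
    linarith
  have hpos : 0 < Real.log 2 := Real.log_pos one_lt_two
  have h34 : Real.log 2 ≤ (Real.log 2) ^ ((3:ℝ)/4) := by
    calc Real.log 2 = (Real.log 2) ^ (1:ℝ) := (Real.rpow_one _).symm
      _ ≤ (Real.log 2) ^ ((3:ℝ)/4) :=
        Real.rpow_le_rpow_of_exponent_ge hpos hlog.le (by norm_num)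
  have hgt : (0.6931471803 : ℝ) < Real.log 2 := Real.log_two_gt_d9
  push_cast
  nlinarith

lemma tt_pow_ge_one {k : ℕ} (hk : 1 ≤ k) : 1 ≤ tt (2 ^ k) :=
  le_trans tt_two (tt_mono (by norm_num) (by
    calc 2 = 2 ^ 1 := (pow_one 2).symm
      _ ≤ 2 ^ k := Nat.pow_le_pow_right (by norm_num) hk))

lemma vol_bound_aux {k : ℕ} (hk : 1 ≤ k) :
    (2:ℝ) ^ (k+1) * ((2:ℝ) ^ (k+1) * (2 / tt (2 ^ k) ^ 2)) ≤
      (8 / (Real.log 2) ^ ((3:ℝ)/2)) * (k:ℝ) ^ (-(3:ℝ)/2) := by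
  have hkpos : (0:ℝ) < (k:ℝ) := by exact_mod_cast hk
  have hlog2 : (0:ℝ) < Real.log 2 := Real.log_pos one_lt_two
  have hklpos : (0:ℝ) < (k:ℝ) * Real.log 2 := by positivity
  have hTeq : tt (2 ^ k) = 2 ^ k * ((k:ℝ) * Real.log 2) ^ ((3:ℝ)/4) := by
    unfold tt
    push_cast
    rw [Real.log_pow]
  have hT2 : tt (2 ^ k) ^ 2 = ((2:ℝ) ^ k) ^ 2 * ((k:ℝ) * Real.log 2) ^ ((3:ℝ)/2) := by
    rw [hTeq, mul_pow]
    congr 1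
    rw [sq, ← Real.rpow_add hklpos]
    norm_num
  have hmul : ((k:ℝ) * Real.log 2) ^ ((3:ℝ)/2)
      = (k:ℝ) ^ ((3:ℝ)/2) * (Real.log 2) ^ ((3:ℝ)/2) :=
    Real.mul_rpow hkpos.le hlog2.le
  have hneg : (k:ℝ) ^ (-(3:ℝ)/2) = ((k:ℝ) ^ ((3:ℝ)/2))⁻¹ := by
    rw [neg_div, Real.rpow_neg hkpos.le]
  have hrk : (0:ℝ) < (k:ℝ) ^ ((3:ℝ)/2) := Real.rpow_pos_of_pos hkpos _
  have hrl : (0:ℝ) < (Real.log 2) ^ ((3:ℝ)/2) := Real.rpow_pos_of_pos hlog2 _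
  rw [hT2, hmul, hneg]
  apply le_of_eq
  have h2k : (0:ℝ) < (2:ℝ) ^ k := by positivity
  field_simp
  ring

/-- The block events for Borel–Cantelli. -/
def Ak (k : ℕ) : Set ℝ :=
  ⋃ j ∈ Finset.Icc 1 (2 ^ (k+1)), ⋃ i ∈ Finset.Ico 1 j,
    (Set.Ico (0:ℝ) 1 ∩ (tauB^[i-1]) ⁻¹' (Gs (tt (2 ^ k))) ∩ (tauB^[j-1]) ⁻¹' (Gs (tt (2 ^ k))))

lemma vol_Ak {k : ℕ} (hk : 1 ≤ k) :
    volume (Ak k) ≤ ENNReal.ofReal ((8 / (Real.log 2) ^ ((3:ℝ)/2)) * (k:ℝ) ^ (-(3:ℝ)/2)) := by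
  have hT : 1 ≤ tt (2 ^ k) := tt_pow_ge_one hk
  have hpair : ∀ j ∈ Finset.Icc 1 (2 ^ (k+1)), ∀ i ∈ Finset.Ico 1 j,
      volume (Set.Ico (0:ℝ) 1 ∩ (tauB^[i-1]) ⁻¹' (Gs (tt (2 ^ k)))
        ∩ (tauB^[j-1]) ⁻¹' (Gs (tt (2 ^ k)))) ≤ ENNReal.ofReal (2 / tt (2 ^ k) ^ 2) := by
    intro j hj i hi
    rw [Finset.mem_Icc] at hj
    rw [Finset.mem_Ico] at hi
    have hji : j - 1 = (i - 1) + ((j - i - 1) + 1) := by omega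
    rw [hji]
    exact pair_bound (i-1) (j - i - 1) hT
  have hstep1 : ∀ j ∈ Finset.Icc 1 (2 ^ (k+1)),
      volume (⋃ i ∈ Finset.Ico 1 j,
        (Set.Ico (0:ℝ) 1 ∩ (tauB^[i-1]) ⁻¹' (Gs (tt (2 ^ k)))
          ∩ (tauB^[j-1]) ⁻¹' (Gs (tt (2 ^ k)))))
      ≤ ((2 ^ (k+1) : ℕ) : ℝ≥0∞) * ENNReal.ofReal (2 / tt (2 ^ k) ^ 2) := by
    intro j hj
    calc volume _ ≤ ∑ i ∈ Finset.Ico 1 j, volume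
          (Set.Ico (0:ℝ) 1 ∩ (tauB^[i-1]) ⁻¹' (Gs (tt (2 ^ k)))
            ∩ (tauB^[j-1]) ⁻¹' (Gs (tt (2 ^ k)))) := measure_biUnion_finset_le _ _
      _ ≤ ∑ _i ∈ Finset.Ico 1 j, ENNReal.ofReal (2 / tt (2 ^ k) ^ 2) :=
          Finset.sum_le_sum (hpair j hj)
      _ = ((Finset.Ico 1 j).card : ℝ≥0∞) * ENNReal.ofReal (2 / tt (2 ^ k) ^ 2) := by
          rw [Finset.sum_const, nsmul_eq_mul]
      _ ≤ ((2 ^ (k+1) : ℕ) : ℝ≥0∞) * ENNReal.ofReal (2 / tt (2 ^ k) ^ 2) := by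
          apply mul_le_mul_left
          have hcard : (Finset.Ico 1 j).card ≤ 2 ^ (k+1) := by
            rw [Finset.mem_Icc] at hj
            rw [Nat.card_Ico]
            omega
          exact_mod_cast Nat.cast_le.mpr hcard
  calc volume (Ak k) ≤ ∑ j ∈ Finset.Icc 1 (2 ^ (k+1)), volume (⋃ i ∈ Finset.Ico 1 j,
        (Set.Ico (0:ℝ) 1 ∩ (tauB^[i-1]) ⁻¹' (Gs (tt (2 ^ k)))
          ∩ (tauB^[j-1]) ⁻¹' (Gs (tt (2 ^ k))))) := measure_biUnion_finset_le _ _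
    _ ≤ ∑ _j ∈ Finset.Icc 1 (2 ^ (k+1)),
          ((2 ^ (k+1) : ℕ) : ℝ≥0∞) * ENNReal.ofReal (2 / tt (2 ^ k) ^ 2) :=
        Finset.sum_le_sum hstep1
    _ ≤ ((2 ^ (k+1) : ℕ) : ℝ≥0∞) *
          (((2 ^ (k+1) : ℕ) : ℝ≥0∞) * ENNReal.ofReal (2 / tt (2 ^ k) ^ 2)) := by
        rw [Finset.sum_const, nsmul_eq_mul]
        apply mul_le_mul_left
        have : (Finset.Icc 1 (2 ^ (k+1))).card ≤ 2 ^ (k+1) := by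
          rw [Nat.card_Icc]
          simp
        exact_mod_cast Nat.cast_le.mpr this
    _ ≤ ENNReal.ofReal ((8 / (Real.log 2) ^ ((3:ℝ)/2)) * (k:ℝ) ^ (-(3:ℝ)/2)) := by
        have hT0 : (0:ℝ) < tt (2 ^ k) := by linarith
        have hcast : ((2 ^ (k+1) : ℕ) : ℝ≥0∞) = ENNReal.ofReal ((2:ℝ) ^ (k+1)) := by
          rw [← ENNReal.ofReal_natCast (2 ^ (k+1))]
          congr 1
          push_cast
          ring
        rw [hcast, ← ENNReal.ofReal_mul (by positivity), ← ENNReal.ofReal_mul (by positivity)]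
        exact ENNReal.ofReal_le_ofReal (vol_bound_aux hk)

lemma tsum_vol_Ak_ne_top : (∑' k : ℕ, volume (Ak k)) ≠ ⊤ := by
  classical
  set Cc : ℝ := 8 / (Real.log 2) ^ ((3:ℝ)/2) with hCc
  have hCc0 : 0 ≤ Cc := by
    have : (0:ℝ) < (Real.log 2) ^ ((3:ℝ)/2) :=
      Real.rpow_pos_of_pos (Real.log_pos one_lt_two) _
    positivity
  set g : ℕ → ℝ := fun k => if k = 0 then 1 else Cc * (k:ℝ) ^ (-(3:ℝ)/2) with hgdef
  have hg0 : ∀ k, 0 ≤ g k := by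
    intro k
    by_cases h : k = 0 <;> simp [hgdef, h]
    positivity
  have hsum : Summable g := by
    have h1 : Summable (fun k : ℕ => Cc * (k:ℝ) ^ (-(3:ℝ)/2)) := by
      apply Summable.mul_left
      rw [show (-(3:ℝ)/2) = -(3/2 : ℝ) by norm_num]
      exact Real.summable_nat_rpow.mpr (by norm_num)
    have h2 : Summable (fun k : ℕ => if k = 0 then (1:ℝ) else 0) := by
      apply summable_of_ne_finset_zero (s := {0})
      intro b hb
      simp only [Finset.mem_singleton] at hb
      exact if_neg hb
    refine (h1.add h2).congr ?_
    intro k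
    by_cases h : k = 0
    · subst h
      simp [hgdef, Real.zero_rpow (by norm_num : (-(3:ℝ)/2) ≠ 0)]
    · simp [hgdef, h]
  have hvol : ∀ k, volume (Ak k) ≤ ENNReal.ofReal (g k) := by
    intro k
    rcases Nat.eq_zero_or_pos k with h | h
    · subst h
      have hsub : Ak 0 ⊆ Set.Ico (0:ℝ) 1 := by
        intro x hx
        simp only [Ak, Set.mem_iUnion] at hx
        obtain ⟨j, _, i, _, hmem⟩ := hx
        exact hmem.1.1
      calc volume (Ak 0) ≤ volume (Set.Ico (0:ℝ) 1) := measure_mono hsub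
        _ = ENNReal.ofReal 1 := by rw [Real.volume_Ico]; norm_num
        _ = ENNReal.ofReal (g 0) := by simp [hgdef]
    · have h2 := vol_Ak h
      have : g k = Cc * (k:ℝ) ^ (-(3:ℝ)/2) := by
        have hk0 : k ≠ 0 := by omega
        simp [hgdef, hk0]
      rw [this]
      exact h2
  have hle : (∑' k : ℕ, volume (Ak k)) ≤ ENNReal.ofReal (∑' k, g k) := by
    calc (∑' k : ℕ, volume (Ak k)) ≤ ∑' k : ℕ, ENNReal.ofReal (g k) := ENNReal.tsum_le_tsum hvol
      _ = ENNReal.ofReal (∑' k, g k) := (ENNReal.ofReal_tsum_of_nonneg hg0 hsum).symm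
  exact ne_top_of_le_ne_top ENNReal.ofReal_ne_top hle

lemma mem_Ak_of_pair {x : ℝ} (hx : x ∈ Set.Ico (0:ℝ) 1) {n i j : ℕ}
    (h1i : 1 ≤ i) (hij : i < j) (hjn : j ≤ n)
    (hi : tt n ≤ (⌊1 / tauB^[i-1] x⌋ : ℝ)) (hj : tt n ≤ (⌊1 / tauB^[j-1] x⌋ : ℝ)) :
    x ∈ Ak (Nat.log 2 n) := by
  set k := Nat.log 2 n with hk
  have hn1 : 1 ≤ n := le_trans (by omega) hjn
  have h2k : 2 ^ k ≤ n := Nat.pow_log_le_self 2 (by omega)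
  have hnk : n < 2 ^ (k+1) := Nat.lt_pow_succ_log_self (by norm_num) n
  have hT : tt (2 ^ k) ≤ tt n := tt_mono Nat.one_le_two_pow h2k
  simp only [Ak, Set.mem_iUnion]
  refine ⟨j, Finset.mem_Icc.mpr ⟨by omega, by omega⟩, i, Finset.mem_Ico.mpr ⟨h1i, hij⟩, ?_⟩
  exact ⟨⟨hx, ⟨tauB_iter_mem hx _, le_trans hT hi⟩⟩, ⟨tauB_iter_mem hx _, le_trans hT hj⟩⟩

open Classical in
/-- For the induced digits `β_i = χ ∘ τ_B^{i-1}` and `t_n = n·(log n)^{3/4}`, Lebesgue-almost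
surely only finitely many `n` satisfy `#{i ≤ n : β_i ≥ t_n} ≥ 2`. -/
theorem stmt10 :
    volume {x : ℝ | x ∈ Set.Ico (0 : ℝ) 1 ∧
      {n : ℕ | 2 ≤ ((Finset.Icc 1 n).filter
        (fun i => (n : ℝ) * (Real.log n) ^ ((3 : ℝ) / 4) ≤
          (⌊1 / tauB^[i - 1] x⌋ : ℝ))).card}.Infinite} = 0 := by
  apply measure_mono_null ?_ (measure_limsup_atTop_eq_zero tsum_vol_Ak_ne_top (s := Ak))
  rintro x ⟨hx, hinf⟩
  rw [Filter.mem_limsup_iff_frequently_mem, Nat.frequently_atTop_iff_infinite]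
  have key : ∀ n ∈ {n : ℕ | 2 ≤ ((Finset.Icc 1 n).filter
      (fun i => (n : ℝ) * (Real.log n) ^ ((3 : ℝ) / 4) ≤
        (⌊1 / tauB^[i - 1] x⌋ : ℝ))).card}, x ∈ Ak (Nat.log 2 n) := by
    intro n hn
    have hcard : 1 < ((Finset.Icc 1 n).filter
        (fun i => (n : ℝ) * (Real.log n) ^ ((3 : ℝ) / 4) ≤
          (⌊1 / tauB^[i - 1] x⌋ : ℝ))).card := lt_of_lt_of_le one_lt_two hn
    obtain ⟨a, ha, b, hb, hab⟩ := Finset.one_lt_card.mp hcard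
    rw [Finset.mem_filter, Finset.mem_Icc] at ha hb
    rcases lt_or_gt_of_ne hab with h | h
    · exact mem_Ak_of_pair hx ha.1.1 h hb.1.2 ha.2 hb.2
    · exact mem_Ak_of_pair hx hb.1.1 h ha.1.2 hb.2 ha.2
  by_contra hfin
  rw [Set.not_infinite] at hfin
  obtain ⟨K, hK⟩ := hfin.bddAbove
  refine hinf ((Set.finite_Iio (2 ^ (K+1))).subset ?_)
  intro n hn
  have hmem : Nat.log 2 n ∈ {k | x ∈ Ak k} := key n hn
  have hle : Nat.log 2 n ≤ K := hK hmem
  have h1 : n < 2 ^ (Nat.log 2 n + 1) := Nat.lt_pow_succ_log_self (by norm_num) n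
  have h2 : 2 ^ (Nat.log 2 n + 1) ≤ 2 ^ (K+1) := Nat.pow_le_pow_right (by norm_num) (by omega)
  exact Set.mem_Iio.mpr (lt_of_lt_of_le h1 h2)
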